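/- Every Satake diagram is a generalized Satake diagram: Sat(A) ⊆ GSat(A). Moreover, if (X,τ)∈CD(A)∖GSat(A), then there exists (i,j)∈(I∖X)×X with τ(i)=i, X̌(i)={j}, a_{ij}=a_{ji}=−1 and α_i(ρ_X^∨)=−1/2∉Z. -/
import Mathlib


open scoped BigOperators

namespace GSat

noncomputable section

variable {I : Type} [Fintype I] [DecidableEq I]

/-- A Cartan matrix of finite type; convention: `A i j = α_j (h_i)`.
Finite type is encoded by positive definiteness of a symmetrization. -/
structure IsCartanFin (A : Matrix I I ℤ) : Prop where
  diag : ∀ i, A i i = 2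
  offdiag_nonpos : ∀ i j, i ≠ j → A i j ≤ 0
  symm_zero : ∀ i j, A i j = 0 → A j i = 0
  finiteType : ∃ d : I → ℚ, (∀ i, 0 < d i) ∧ (∀ i j, d i * (A i j : ℚ) = d j * (A j i : ℚ)) ∧
    ∀ v : I → ℚ, v ≠ 0 → 0 < ∑ i, ∑ j, d i * (A i j : ℚ) * v i * v j

/-- A Cartan matrix is indecomposable. -/
def Indecomposable (A : Matrix I I ℤ) : Prop :=
  Nonempty I ∧ ∀ s : Set I, (∀ i ∈ s, ∀ j, j ∉ s → A i j = 0) → s = ∅ ∨ s = Set.univ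

/-- The pairing `α (h_i)` where `v` is the coordinate vector of `α` in the basis of
simple roots. -/
def pairA (A : Matrix I I ℤ) (i : I) (v : I → ℝ) : ℝ := ∑ j, (A i j : ℝ) * v j

/-- The coordinate vector of the simple root `α_i`. -/
def al (i : I) : I → ℝ := Pi.single i 1

/-- The simple reflection `s_i (α) = α - α(h_i) α_i` on `h* = ℝ^I` (coordinates w.r.t.
the simple roots), as a linear map. -/
def reflMap (A : Matrix I I ℤ) (i : I) : (I → ℝ) →ₗ[ℝ] (I → ℝ) where
  toFun v k := v k - (if k = i then pairA A i v else 0)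
  map_add' v w := by
    funext k
    by_cases hk : k = i <;>
      simp [pairA, hk, Finset.sum_add_distrib, mul_add] <;> ring
  map_smul' c v := by
    funext k
    have hs : ∑ j, (A i j : ℝ) * (c * v j) = c * ∑ j, (A i j : ℝ) * v j := by
      rw [Finset.mul_sum]; exact Finset.sum_congr rfl fun j _ => by ring
    by_cases hk : k = i <;> simp [pairA, hk, hs] <;> ring

theorem pairA_reflMap (A : Matrix I I ℤ) (h2 : ∀ i, A i i = 2) (i : I) (v : I → ℝ) :
    pairA A i (reflMap A i v) = - pairA A i v := by
  have : ∀ j, (A i j : ℝ) * (reflMap A i v j)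
      = (A i j : ℝ) * v j - (if j = i then (A i j : ℝ) * pairA A i v else 0) := by
    intro j
    by_cases hj : j = i <;> simp [reflMap, hj] <;> ring
  rw [pairA]
  calc ∑ j, (A i j : ℝ) * (reflMap A i v) j
      = ∑ j, ((A i j : ℝ) * v j - (if j = i then (A i j : ℝ) * pairA A i v else 0)) := by
        exact Finset.sum_congr rfl fun j _ => this j
    _ = pairA A i v - (A i i : ℝ) * pairA A i v := by
        rw [Finset.sum_sub_distrib, Finset.sum_ite_eq' Finset.univ i
          (fun j => (A i j : ℝ) * pairA A i v)]
        simp [pairA]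
    _ = - pairA A i v := by rw [h2 i]; push_cast; ring

theorem reflMap_invol (A : Matrix I I ℤ) (h2 : ∀ i, A i i = 2) (i : I) :
    Function.Involutive (reflMap A i) := by
  intro v
  funext k
  by_cases hk : k = i
  · show reflMap A i v k - _ = _
    rw [pairA_reflMap A h2 i v]
    simp [reflMap, hk]
  · show reflMap A i v k - _ = _
    simp [reflMap, hk]

/-- The simple reflection `s_i` as a linear automorphism. -/
noncomputable def srefl (A : Matrix I I ℤ) (h2 : ∀ i, A i i = 2) (i : I) :
    (I → ℝ) ≃ₗ[ℝ] (I → ℝ) :=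
  { reflMap A i with
    invFun := reflMap A i
    left_inv := reflMap_invol A h2 i
    right_inv := reflMap_invol A h2 i }

/-- The composite `s_{i_1} ∘ s_{i_2} ∘ ⋯ ∘ s_{i_l}` for a word `[i_1, …, i_l]`. -/
noncomputable def comboWord (A : Matrix I I ℤ) (h2 : ∀ i, A i i = 2) :
    List I → ((I → ℝ) ≃ₗ[ℝ] (I → ℝ))
  | [] => LinearEquiv.refl ℝ (I → ℝ)
  | i :: l => (comboWord A h2 l).trans (srefl A h2 i)

/-- The Weyl group `W` (generated by all simple reflections). -/
def Wgroup (A : Matrix I I ℤ) (h2 : ∀ i, A i i = 2) :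
    Subgroup ((I → ℝ) ≃ₗ[ℝ] (I → ℝ)) :=
  Subgroup.closure (Set.range (srefl A h2))

/-- The parabolic subgroup `W_X` generated by the simple reflections `s_i`, `i ∈ X`. -/
def WXgroup (A : Matrix I I ℤ) (h2 : ∀ i, A i i = 2) (X : Finset I) :
    Subgroup ((I → ℝ) ≃ₗ[ℝ] (I → ℝ)) :=
  Subgroup.closure ((fun i => srefl A h2 i) '' ↑X)

/-- A compatible decoration `(X, τ)` together with the longest element `w_X` of `W_X`:
`τ` is an involutive diagram automorphism with `τ(X) = X` and `τ|_X = τ_{0,X}`, the latter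
being encoded by `w_X (α_i) = -α_{τ(i)}` for `i ∈ X` (which also characterises `w_X`
uniquely as an element of `W_X`). -/
structure CDdata (A : Matrix I I ℤ) (h2 : ∀ i, A i i = 2) where
  X : Finset I
  τ : Equiv.Perm I
  wX : (I → ℝ) ≃ₗ[ℝ] (I → ℝ)
  τ_cartan : ∀ i j, A (τ i) (τ j) = A i j
  τ_invol : ∀ i, τ (τ i) = i
  τ_X : ∀ i, i ∈ X ↔ τ i ∈ X
  wX_mem : wX ∈ WXgroup A h2 X
  wX_simple : ∀ i ∈ X, wX (al i) = -(al (τ i))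

variable {A : Matrix I I ℤ} {h2 : ∀ i, A i i = 2}

/-- The involution `θ = -w_X ∘ τ` acting on `h*` (in simple root coordinates). -/
def thetaV (cd : CDdata A h2) (v : I → ℝ) : I → ℝ := -(cd.wX (fun j => v (cd.τ j)))

/-- `(X,τ)` is a generalized Satake diagram. -/
def IsGSat (cd : CDdata A h2) : Prop :=
  ¬ ∃ i j, i ∉ cd.X ∧ j ∈ cd.X ∧ cd.τ i = i ∧
      cd.wX (al i) = al i + al j ∧ A i j = -1

/-- Data describing the element `2 ρ_X^∨` (twice the dual Weyl vector of `g_X`),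
given by its coordinates in the basis of the `h_j`. -/
structure RhoData (cd : CDdata A h2) where
  tworho : I → ℤ
  supp : ∀ j, j ∉ cd.X → tworho j = 0
  pair_X : ∀ i ∈ cd.X, ∑ j, tworho j * A j i = 2

/-- `α_i (2ρ_X^∨)`. -/
def rhoPair (cd : CDdata A h2) (rd : RhoData cd) (i : I) : ℤ := ∑ j, rd.tworho j * A j i

/-- `ζ(α) = (-1)^(α(2 ρ_X^∨))` for `α` in the root lattice. -/
def zetaC (cd : CDdata A h2) (rd : RhoData cd) (c : I → ℤ) : ℂ :=
  (-1 : ℂ) ^ (∑ i, c i * rhoPair cd rd i)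

/-- `(X,τ)` is a Satake diagram. -/
def IsSat (cd : CDdata A h2) (rd : RhoData cd) : Prop :=
  ∀ i, i ∉ cd.X → cd.τ i = i → (2 : ℤ) ∣ rhoPair cd rd i

/-- The excluded rank-two diagram: one white node joined by a single edge to one black
node. -/
def IsExcluded (cd : CDdata A h2) : Prop :=
  ∃ i j, i ≠ j ∧ (Finset.univ : Finset I) = {i, j} ∧ cd.X = {j} ∧ A i j = -1 ∧ A j i = -1

/-- `(X,τ)` is a weak Satake diagram. -/
def IsWSat (cd : CDdata A h2) (rd : RhoData cd) : Prop :=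
  IsGSat cd ∧ ¬ IsSat cd rd ∧ ¬ IsExcluded cd

/-- `S = I^*` contains exactly one element of each `τ`-orbit in `I ∖ X`. -/
def IsOrbitReps (cd : CDdata A h2) (S : Finset I) : Prop :=
  (∀ i ∈ S, i ∉ cd.X) ∧ (∀ i, i ∉ cd.X → i ∈ S ∨ cd.τ i ∈ S) ∧
    (∀ i ∈ S, cd.τ i ∈ S → cd.τ i = i)

/-- `I_diff = { i ∈ I^* : τ(i) ≠ i and (θ(α_i))(h_i) ≠ 0 }`. -/
def Idiff (cd : CDdata A h2) (S : Finset I) : Set I :=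
  {i | i ∈ S ∧ cd.τ i ≠ i ∧ pairA A i (thetaV cd (al i)) ≠ 0}

/-- `I_ns = { i : (θ(α_i))(h_i) = -2 }`. -/
def Ins (cd : CDdata A h2) : Set I :=
  {i | pairA A i (thetaV cd (al i)) = -2}

/-- `I_nsf = { j ∈ I_ns : a_{ij} even for all i ∈ I_ns }`. -/
def Insf (cd : CDdata A h2) : Set I :=
  {j | j ∈ Ins cd ∧ ∀ i ∈ Ins cd, (2 : ℤ) ∣ A i j}

end

end GSat
namespace GSat

variable {I : Type} [Fintype I] [DecidableEq I]

/-- The neighbour relation within `X` on the Dynkin diagram of `A`. -/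
def neighIn (A : Matrix I I ℤ) (Xs : Set I) (a b : I) : Prop :=
  a ∈ Xs ∧ b ∈ Xs ∧ a ≠ b ∧ A a b ≠ 0

/-- `X̌(i)`: the union of the connected components of `X` neighbouring `{i, τ(i)}`. -/
def checkX {A : Matrix I I ℤ} {h2 : ∀ i, A i i = 2} (cd : CDdata A h2) (i : I) : Set I :=
  {j | j ∈ cd.X ∧ ∃ k ∈ cd.X, Relation.ReflTransGen (neighIn A ↑cd.X) j k ∧
    (A k i ≠ 0 ∨ A k (cd.τ i) ≠ 0)}

section Helpers

variable {A : Matrix I I ℤ} {h2 : ∀ i, A i i = 2}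

/-- The symmetrized bilinear form `B(u,v) = ∑ d_k a_{kl} u_k v_l`. -/
def Bform (A : Matrix I I ℤ) (d : I → ℚ) (u v : I → ℝ) : ℝ :=
  ∑ k, ∑ l, (d k : ℝ) * (A k l : ℝ) * u k * v l

lemma srefl_apply (m : I) (u : I → ℝ) (k : I) :
    srefl A h2 m u k = u k - (if k = m then pairA A m u else 0) := rfl

lemma Bform_al (d : I → ℚ) (a b : I) :
    Bform A d (al a) (al b) = (d a : ℝ) * (A a b : ℝ) := by
  unfold Bform al
  simp [Pi.single_apply, mul_ite, ite_mul, Finset.sum_ite_eq', Finset.sum_ite_eq]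

lemma Bform_add_left (d : I → ℚ) (u w v : I → ℝ) :
    Bform A d (u + w) v = Bform A d u v + Bform A d w v := by
  unfold Bform
  rw [← Finset.sum_add_distrib]
  refine Finset.sum_congr rfl fun k _ => ?_
  rw [← Finset.sum_add_distrib]
  exact Finset.sum_congr rfl fun l _ => by simp; ring

lemma Bform_add_right (d : I → ℚ) (u v w : I → ℝ) :
    Bform A d u (v + w) = Bform A d u v + Bform A d u w := by
  unfold Bform
  rw [← Finset.sum_add_distrib]
  refine Finset.sum_congr rfl fun k _ => ?_
  rw [← Finset.sum_add_distrib]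
  exact Finset.sum_congr rfl fun l _ => by simp; ring

lemma Bform_neg_right (d : I → ℚ) (u v : I → ℝ) :
    Bform A d u (-v) = -Bform A d u v := by
  unfold Bform
  rw [← Finset.sum_neg_distrib]
  refine Finset.sum_congr rfl fun k _ => ?_
  rw [← Finset.sum_neg_distrib]
  exact Finset.sum_congr rfl fun l _ => by simp

lemma Bform_srefl (d : I → ℚ) (hsym : ∀ k l, (d k : ℝ) * (A k l : ℝ) = (d l : ℝ) * (A l k : ℝ))
    (m : I) (u v : I → ℝ) :
    Bform A d (srefl A h2 m u) (srefl A h2 m v) = Bform A d u v := by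
  have hterm : ∀ k l, (d k : ℝ) * (A k l : ℝ) * (srefl A h2 m u k) * (srefl A h2 m v l)
      = (d k : ℝ) * (A k l : ℝ) * u k * v l
        - (if k = m then (d m : ℝ) * (A m l : ℝ) * pairA A m u * v l else 0)
        - (if l = m then (d k : ℝ) * (A k m : ℝ) * u k * pairA A m v else 0)
        + (if k = m then (if l = m then
            (d m : ℝ) * (A m m : ℝ) * pairA A m u * pairA A m v else 0) else 0) := by
    intro k l
    rw [srefl_apply, srefl_apply]
    by_cases hk : k = m <;> by_cases hl : l = m <;>
      simp only [hk, hl, if_pos rfl, if_true, if_neg, if_false, ite_true, ite_false] <;>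
      first
        | ring
        | (simp only [if_neg hk, if_neg hl]; ring)
        | (simp only [if_neg hk]; ring)
        | (simp only [if_neg hl]; ring)
  have hS2 : ∑ k, ∑ l, (if k = m then (d m : ℝ) * (A m l : ℝ) * pairA A m u * v l else 0)
      = (d m : ℝ) * pairA A m u * pairA A m v := by
    rw [Finset.sum_eq_single m]
    · simp only [eq_self_iff_true, if_true]
      calc ∑ l, (d m : ℝ) * (A m l : ℝ) * pairA A m u * v l
          = ∑ l, ((d m : ℝ) * pairA A m u) * ((A m l : ℝ) * v l) :=
            Finset.sum_congr rfl fun l _ => by ring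
        _ = ((d m : ℝ) * pairA A m u) * ∑ l, (A m l : ℝ) * v l := (Finset.mul_sum _ _ _).symm
        _ = (d m : ℝ) * pairA A m u * pairA A m v := rfl
    · intro k _ hk; simp [hk]
    · intro h; exact absurd (Finset.mem_univ m) h
  have hS3 : ∑ k, ∑ l, (if l = m then (d k : ℝ) * (A k m : ℝ) * u k * pairA A m v else 0)
      = (d m : ℝ) * pairA A m u * pairA A m v := by
    have hcol : ∀ k : I, ∑ l, (if l = m then (d k : ℝ) * (A k m : ℝ) * u k * pairA A m v else 0)
        = ((d m : ℝ) * pairA A m v) * ((A m k : ℝ) * u k) := by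
      intro k
      rw [Finset.sum_ite_eq' Finset.univ m]
      simp only [Finset.mem_univ, if_pos]
      rw [hsym k m]; ring
    calc ∑ k, ∑ l, (if l = m then (d k : ℝ) * (A k m : ℝ) * u k * pairA A m v else 0)
        = ∑ k, ((d m : ℝ) * pairA A m v) * ((A m k : ℝ) * u k) :=
          Finset.sum_congr rfl fun k _ => hcol k
      _ = ((d m : ℝ) * pairA A m v) * ∑ k, (A m k : ℝ) * u k := (Finset.mul_sum _ _ _).symm
      _ = (d m : ℝ) * pairA A m u * pairA A m v := by
          have : (∑ k, (A m k : ℝ) * u k) = pairA A m u := rfl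
          rw [this]; ring
  have hS4 : ∑ k, ∑ l, (if k = m then (if l = m then
        (d m : ℝ) * (A m m : ℝ) * pairA A m u * pairA A m v else 0) else 0)
      = (2 : ℝ) * (d m : ℝ) * pairA A m u * pairA A m v := by
    rw [Finset.sum_eq_single m]
    · simp only [eq_self_iff_true, if_true]
      rw [Finset.sum_ite_eq' Finset.univ m]
      simp only [Finset.mem_univ, if_pos, h2 m]
      push_cast; ring
    · intro k _ hk; simp [hk]
    · intro h; exact absurd (Finset.mem_univ m) h
  calc Bform A d (srefl A h2 m u) (srefl A h2 m v)
      = ∑ k, ∑ l, ((d k : ℝ) * (A k l : ℝ) * u k * v l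
        - (if k = m then (d m : ℝ) * (A m l : ℝ) * pairA A m u * v l else 0)
        - (if l = m then (d k : ℝ) * (A k m : ℝ) * u k * pairA A m v else 0)
        + (if k = m then (if l = m then
            (d m : ℝ) * (A m m : ℝ) * pairA A m u * pairA A m v else 0) else 0)) := by
        unfold Bform
        exact Finset.sum_congr rfl fun k _ => Finset.sum_congr rfl fun l _ => hterm k l
    _ = Bform A d u v := by
        simp only [Finset.sum_add_distrib, Finset.sum_sub_distrib]
        rw [hS2, hS3, hS4]
        unfold Bform
        ring

lemma Bform_wX (d : I → ℚ)
    (hsym : ∀ k l, (d k : ℝ) * (A k l : ℝ) = (d l : ℝ) * (A l k : ℝ))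
    (cd : CDdata A h2) (u v : I → ℝ) :
    Bform A d (cd.wX u) (cd.wX v) = Bform A d u v := by
  have hmem := cd.wX_mem
  unfold WXgroup at hmem
  refine Subgroup.closure_induction
    (p := fun g _ => ∀ u v, Bform A d (g u) (g v) = Bform A d u v)
    ?_ ?_ ?_ ?_ hmem u v
  · rintro x ⟨m, _, rfl⟩ u v
    exact Bform_srefl d hsym m u v
  · intro u v; rfl
  · intro x y _ _ hx hy u v
    have hxy : ∀ w : I → ℝ, (x * y) w = x (y w) := fun w => rfl
    rw [hxy, hxy, hx, hy]
  · intro x _ hx u v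
    have h1 : x (x⁻¹ u) = u := x.apply_symm_apply u
    have h2' : x (x⁻¹ v) = v := x.apply_symm_apply v
    calc Bform A d (x⁻¹ u) (x⁻¹ v) = Bform A d (x (x⁻¹ u)) (x (x⁻¹ v)) := (hx _ _).symm
      _ = Bform A d u v := by rw [h1, h2']

end Helpers

/-- Every Satake diagram is a generalized Satake diagram:
`Sat(A) ⊆ GSat(A)`.  Moreover, if `(X,τ) ∈ CD(A) ∖ GSat(A)`, then there exists
`(i,j) ∈ (I∖X)×X` with `τ(i)=i`, `X̌(i)={j}`, `a_{ij}=a_{ji}=−1` and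
`α_i(ρ_X^∨) = −1/2 ∉ ℤ` (i.e. `α_i(2ρ_X^∨) = −1`). -/
theorem stmt13 (A : Matrix I I ℤ) (hA : IsCartanFin A) (h2 : ∀ i, A i i = 2)
    (cd : CDdata A h2) (rd : RhoData cd) :
    (IsSat cd rd → IsGSat cd) ∧
      (¬ IsGSat cd → ∃ i j, i ∉ cd.X ∧ j ∈ cd.X ∧ cd.τ i = i ∧
        checkX cd i = {j} ∧ A i j = -1 ∧ A j i = -1 ∧ rhoPair cd rd i = -1) := by
  obtain ⟨d, hdpos, hsymQ, -⟩ := hA.finiteType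
  have hsym : ∀ k l, (d k : ℝ) * (A k l : ℝ) = (d l : ℝ) * (A l k : ℝ) := fun k l => by
    exact_mod_cast congrArg (fun q : ℚ => (q : ℝ)) (hsymQ k l)
  have hdR : ∀ k, (0 : ℝ) < (d k : ℝ) := fun k => by exact_mod_cast hdpos k
  have main : ¬ IsGSat cd → ∃ i j, i ∉ cd.X ∧ j ∈ cd.X ∧ cd.τ i = i ∧
      checkX cd i = {j} ∧ A i j = -1 ∧ A j i = -1 ∧ rhoPair cd rd i = -1 := by
    intro hng
    rw [IsGSat, not_not] at hng
    obtain ⟨i, j, hiX, hjX, hτi, hw, hAij⟩ := hng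
    have hij : i ≠ j := fun h => hiX (h ▸ hjX)
    have hBw : ∀ u v, Bform A d (cd.wX u) (cd.wX v) = Bform A d u v := Bform_wX d hsym cd
    -- the self identity, giving `d j = d i` and `A j i = -1`
    have hself := hBw (al i) (al i)
    rw [hw] at hself
    simp only [Bform_add_left, Bform_add_right, Bform_al] at hself
    have hAijR : (A i j : ℝ) = -1 := by exact_mod_cast congrArg (fun n : ℤ => (n : ℝ)) hAij
    have hsymij := hsym j i
    rw [hAijR] at hself hsymij
    have hAiiR : (A i i : ℝ) = 2 := by exact_mod_cast congrArg (fun n : ℤ => (n : ℝ)) (h2 i)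
    have hAjjR : (A j j : ℝ) = 2 := by exact_mod_cast congrArg (fun n : ℤ => (n : ℝ)) (h2 j)
    rw [hAiiR, hAjjR] at hself
    have hdji : (d j : ℝ) = (d i : ℝ) := by nlinarith [hself, hsymij]
    have hAjiR : (A j i : ℝ) = -1 := by
      have hne : (d j : ℝ) ≠ 0 := ne_of_gt (hdR j)
      have : (d j : ℝ) * (A j i : ℝ) = (d j : ℝ) * (-1) := by rw [hsymij, hdji]
      exact mul_left_cancel₀ hne this
    have hAji : A j i = -1 := by exact_mod_cast hAjiR
    -- key identity (†)
    have hdag : ∀ k ∈ cd.X, (d i : ℝ) * (A i k : ℝ)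
        = -((d i : ℝ) * (A i (cd.τ k) : ℝ) + (d j : ℝ) * (A j (cd.τ k) : ℝ)) := by
      intro k hk
      have h1 := hBw (al i) (al k)
      rw [hw, cd.wX_simple k hk] at h1
      simp only [Bform_neg_right, Bform_add_left, Bform_al] at h1
      linarith [h1]
    -- τ fixes j
    have hτj : cd.τ j = j := by
      by_contra hτj
      have h := hdag j hjX
      rw [hAijR] at h
      have hτjX : cd.τ j ∈ cd.X := (cd.τ_X j).mp hjX
      have h1 : A i (cd.τ j) ≤ 0 := hA.offdiag_nonpos _ _ (fun he => hiX (he ▸ hτjX))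
      have h2' : A j (cd.τ j) ≤ 0 := hA.offdiag_nonpos _ _ (Ne.symm hτj)
      have h1R : (A i (cd.τ j) : ℝ) ≤ 0 := by exact_mod_cast h1
      have h2R : (A j (cd.τ j) : ℝ) ≤ 0 := by exact_mod_cast h2'
      nlinarith [hdR i, hdR j, mul_nonpos_of_nonneg_of_nonpos (le_of_lt (hdR i)) h1R,
        mul_nonpos_of_nonneg_of_nonpos (le_of_lt (hdR j)) h2R]
    -- C1 : for k ∈ X, k ≠ j, `A i k = 0`
    have C1 : ∀ k ∈ cd.X, k ≠ j → A i k = 0 := by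
      intro k hk hkj
      have h := hdag k hk
      have hτkX : cd.τ k ∈ cd.X := (cd.τ_X k).mp hk
      have hτkj : cd.τ k ≠ j := by
        intro he
        exact hkj (by rw [← cd.τ_invol k, he, hτj])
      have h1 : A i (cd.τ k) ≤ 0 := hA.offdiag_nonpos _ _ (fun he => hiX (he ▸ hτkX))
      have h2' : A j (cd.τ k) ≤ 0 := hA.offdiag_nonpos _ _ (Ne.symm hτkj)
      have h3 : A i k ≤ 0 := hA.offdiag_nonpos _ _ (fun he => hiX (he ▸ hk))
      have h1R : (A i (cd.τ k) : ℝ) ≤ 0 := by exact_mod_cast h1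
      have h2R : (A j (cd.τ k) : ℝ) ≤ 0 := by exact_mod_cast h2'
      have h3R : (A i k : ℝ) ≤ 0 := by exact_mod_cast h3
      have hze : (A i k : ℝ) = 0 := by
        have hge : (d i : ℝ) * (A i k : ℝ) ≥ 0 := by
          rw [h]
          nlinarith [mul_nonpos_of_nonneg_of_nonpos (le_of_lt (hdR i)) h1R,
            mul_nonpos_of_nonneg_of_nonpos (le_of_lt (hdR j)) h2R]
        nlinarith [hdR i, mul_nonpos_of_nonneg_of_nonpos (le_of_lt (hdR i)) h3R]
      exact_mod_cast hze
    -- C2 : for m ∈ X, m ≠ j, `A j m = 0` and `A m j = 0`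
    have C2 : ∀ m ∈ cd.X, m ≠ j → A j m = 0 ∧ A m j = 0 := by
      intro m hm hmj
      have hτmX : cd.τ m ∈ cd.X := (cd.τ_X m).mp hm
      have hτmj : cd.τ m ≠ j := by
        intro he
        exact hmj (by rw [← cd.τ_invol m, he, hτj])
      have h := hdag (cd.τ m) hτmX
      rw [cd.τ_invol m] at h
      have e1 : A i (cd.τ m) = 0 := C1 _ hτmX hτmj
      have e2 : A i m = 0 := C1 _ hm hmj
      have e1R : (A i (cd.τ m) : ℝ) = 0 := by exact_mod_cast e1
      have e2R : (A i m : ℝ) = 0 := by exact_mod_cast e2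
      rw [e1R, e2R] at h
      have : (d j : ℝ) * (A j m : ℝ) = 0 := by linarith [h]
      have hjm : (A j m : ℝ) = 0 :=
        (mul_eq_zero.mp this).resolve_left (ne_of_gt (hdR j))
      have hjmZ : A j m = 0 := by exact_mod_cast hjm
      exact ⟨hjmZ, hA.symm_zero j m hjmZ⟩
    -- checkX cd i = {j}
    have hchk : checkX cd i = {j} := by
      ext m
      constructor
      · rintro ⟨hmX, k, hkX, hchain, hne⟩
        have hki : A k i ≠ 0 := by
          rcases hne with h | h
          · exact h
          · rwa [hτi] at h
        have hkj : k = j := by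
          by_contra hkj
          exact hki (hA.symm_zero i k (C1 k hkX hkj))
        subst hkj
        rcases Relation.ReflTransGen.cases_tail hchain with h | ⟨c, _, hcj⟩
        · exact h.symm
        · obtain ⟨hcX, -, hcj_ne, hAcj⟩ := hcj
          exact absurd (C2 c hcX hcj_ne).2 hAcj
      · intro hm
        rw [Set.mem_singleton_iff] at hm
        rw [hm]
        exact ⟨hjX, j, hjX, Relation.ReflTransGen.refl, Or.inl (by rw [hAji]; norm_num)⟩
    -- rhoPair cd rd i = -1
    have htwoj : rd.tworho j = 1 := by
      have hp := rd.pair_X j hjX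
      have hz : ∀ k ∈ (Finset.univ : Finset I), k ≠ j → rd.tworho k * A k j = 0 := by
        intro k _ hkj
        by_cases hk : k ∈ cd.X
        · rw [(C2 k hk hkj).2, mul_zero]
        · rw [rd.supp k hk, zero_mul]
      rw [Finset.sum_eq_single j (fun k hk hkj => hz k hk hkj)
        (fun h => absurd (Finset.mem_univ j) h)] at hp
      rw [h2 j] at hp
      omega
    have hrho : rhoPair cd rd i = -1 := by
      unfold rhoPair
      have hz : ∀ k ∈ (Finset.univ : Finset I), k ≠ j → rd.tworho k * A k i = 0 := by
        intro k _ hkj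
        by_cases hk : k ∈ cd.X
        · rw [hA.symm_zero i k (C1 k hk hkj), mul_zero]
        · rw [rd.supp k hk, zero_mul]
      rw [Finset.sum_eq_single j (fun k hk hkj => hz k hk hkj)
        (fun h => absurd (Finset.mem_univ j) h), htwoj, hAji]
      norm_num
    exact ⟨i, j, hiX, hjX, hτi, hchk, hAij, hAji, hrho⟩
  refine ⟨?_, main⟩
  intro hsat
  by_contra hng
  obtain ⟨i, j, hiX, hjX, hτ, -, -, -, hrho⟩ := main hng
  have := hsat i hiX hτ
  rw [hrho] at this
  omega

end GSat
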